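/- Let w be an element of S_Z, let A be a subset of Inv(w), and let n be a positive integer. The map unprime, sending (a^1,...,a^n) to (ceil(a^1),...,ceil(a^n)), is a weight-preserving bijection from RF^+_n(w,A) onto RF_n(w) that commutes with the crystal operators e_i and f_i for all i in {1,...,n-1} (with the convention unprime(0) = 0). -/

import Mathlib

open MvPolynomial

/-! ### Permutations of ℤ, reduced words -/

/-- The simple transposition `s_i = (i, i+1)` of `ℤ`. -/
def sT (i : ℤ) : Equiv.Perm ℤ := Equiv.swap i (i + 1)

/-- The product `s_{i_1} s_{i_2} ⋯ s_{i_l}` of the simple transpositions indexed by a word. -/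
def wordProd (l : List ℤ) : Equiv.Perm ℤ := (l.map sT).prod

/-- `S_ℤ`: the subgroup of permutations of `ℤ` generated by the simple transpositions. -/
def SZSet : Set (Equiv.Perm ℤ) := {w | ∃ l : List ℤ, wordProd l = w}

/-- `S_∞`: the subgroup generated by `s_i` for `i ≥ 1`. -/
def SinftySet : Set (Equiv.Perm ℤ) :=
  {w | ∃ l : List ℤ, (∀ i ∈ l, 1 ≤ i) ∧ wordProd l = w}

/-- `S_n`: the subgroup generated by `s_i` for `1 ≤ i ≤ n-1`. -/
def SnSet (n : ℕ) : Set (Equiv.Perm ℤ) :=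
  {w | ∃ l : List ℤ, (∀ i ∈ l, 1 ≤ i ∧ i < n) ∧ wordProd l = w}

/-- A reduced word for `w`: a minimal length word whose product is `w`. -/
def IsReducedWord (w : Equiv.Perm ℤ) (l : List ℤ) : Prop :=
  wordProd l = w ∧ ∀ m : List ℤ, wordProd m = w → l.length ≤ m.length

/-- The Coxeter length of `w` (the length of any reduced word for `w`). -/
noncomputable def lenOf (w : Equiv.Perm ℤ) : ℕ :=
  sInf {m | ∃ l : List ℤ, wordProd l = w ∧ l.length = m}

/-- The inversion set `Inv(w) = {(a,b) : a < b, w(a) > w(b)}`. -/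
def InvSet (w : Equiv.Perm ℤ) : Set (ℤ × ℤ) := {p | p.1 < p.2 ∧ w p.2 < w p.1}

/-- The Lehmer code `c_i(w) = #{j : i < j, w(i) > w(j)}`. -/
noncomputable def codeOf (w : Equiv.Perm ℤ) (i : ℤ) : ℕ := {j : ℤ | i < j ∧ w j < w i}.ncard

/-- The Rothe diagram `D(w) = {(i, w(j)) : i < j, w(i) > w(j)}`. -/
def RotheD (w : Equiv.Perm ℤ) : Set (ℤ × ℤ) :=
  {p | ∃ j : ℤ, p.1 < j ∧ w j < w p.1 ∧ p.2 = w j}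

/-! ### Primed letters and primed words -/

/-- A primed letter: `(x, false)` denotes the integer `x`, `(x, true)` denotes `x' = x - 1/2`. -/
abbrev PLetter := ℤ × Bool

/-- Twice the value of a primed letter (so that comparisons agree with `1' < 1 < 2' < 2 < ⋯`). -/
def pval (p : PLetter) : ℤ := 2 * p.1 - (if p.2 then 1 else 0)

/-- A strictly decreasing primed word. -/
def PDec (l : List PLetter) : Prop := l.Pairwise (fun p q => pval q < pval p)

/-- A strictly decreasing integer word. -/
def ZDec (l : List ℤ) : Prop := l.Pairwise (fun x y => y < x)

/-- Remove the primes from a primed word (the "ceiling"). -/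
def unprimeW (l : List PLetter) : List ℤ := l.map Prod.fst

/-- Membership in `R⁺(w)`: a primed word whose unprimed form is a reduced word for `w`. -/
def IsPrimedReducedWord (w : Equiv.Perm ℤ) (l : List PLetter) : Prop :=
  IsReducedWord w (unprimeW l)

/-- The set `Marked(i)` of marked inversions of a primed word. -/
def markedSet (l : List PLetter) : Set (ℤ × ℤ) :=
  {p | ∃ j : Fin l.length, (l.get j).2 = true ∧
        p.1 = wordProd ((l.drop ((j : ℕ) + 1)).reverse.map Prod.fst) (l.get j).1 ∧
        p.2 = wordProd ((l.drop ((j : ℕ) + 1)).reverse.map Prod.fst) ((l.get j).1 + 1)}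

/-! ### Factorizations (as sequences of factors) -/

/-- The concatenation of the first `N` factors of a factorization. -/
def concatP (a : ℕ → List PLetter) (N : ℕ) : List PLetter := ((List.range N).map a).flatten

/-- The concatenation of the first `N` factors of an unprimed factorization. -/
def concatZ (a : ℕ → List ℤ) (N : ℕ) : List ℤ := ((List.range N).map a).flatten

/-- `RF⁺(w, A)`: decreasing primed reduced factorizations of `w` with marked set `A`
(all but finitely many factors empty). -/
def RFplus (w : Equiv.Perm ℤ) (A : Set (ℤ × ℤ)) : Set (ℕ → List PLetter) :=
  {a | (∀ i, PDec (a i)) ∧ ∃ N : ℕ, (∀ m, N ≤ m → a m = []) ∧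
        IsPrimedReducedWord w (concatP a N) ∧ markedSet (concatP a N) = A}

/-- `RF⁺_n(w, A)`: elements of `RF⁺(w, A)` with all factors beyond the first `n` empty. -/
def RFplusN (n : ℕ) (w : Equiv.Perm ℤ) (A : Set (ℤ × ℤ)) : Set (ℕ → List PLetter) :=
  {a | (∀ i, PDec (a i)) ∧ (∀ m, n ≤ m → a m = []) ∧
        IsPrimedReducedWord w (concatP a n) ∧ markedSet (concatP a n) = A}

/-- `RF_n(w)`: unprimed decreasing reduced factorizations of `w` into at most `n` factors. -/
def RFZn (n : ℕ) (w : Equiv.Perm ℤ) : Set (ℕ → List ℤ) :=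
  {a | (∀ i, ZDec (a i)) ∧ (∀ m, n ≤ m → a m = []) ∧ IsReducedWord w (concatZ a n)}

/-- Removing the primes from each factor of a primed factorization. -/
def unprimeF (a : ℕ → List PLetter) : ℕ → List ℤ := fun m => unprimeW (a m)

/-! ### The pairing procedure and crystal operators (primed version) -/

/-- Find the first letter `b` in the (decreasing) list with `⌈b⌉ < c`, removing it. -/
def findPairP (c : ℤ) : List PLetter → Option PLetter × List PLetter
  | [] => (none, [])
  | b :: rest =>
      if b.1 < c then (some b, rest)
      else
        let r := findPairP c rest
        (r.1, b :: r.2)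

/-- Iterate the pairing over the letters of `v` from right to left. -/
def pairFoldP (u : List PLetter) (vrev : List PLetter) :
    List (PLetter × PLetter) × List PLetter :=
  vrev.foldl (fun st c =>
    match findPairP c.1 st.2 with
    | (none, r) => (st.1, r)
    | (some b, r) => ((b, c) :: st.1, r)) ([], u)

/-- The set `pair(u, v)` of paired letters, as a list of pairs. -/
def pairsP (u v : List PLetter) : List (PLetter × PLetter) := (pairFoldP u v.reverse).1

/-- The unpaired letters of `v` (in decreasing order). -/
def unpairedSnd (u v : List PLetter) : List PLetter :=
  v.filter fun c => decide (c ∉ (pairsP u v).map Prod.snd)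

/-- The unpaired letters of `u` (in decreasing order). -/
def unpairedFst (u v : List PLetter) : List PLetter :=
  u.filter fun b => decide (b ∉ (pairsP u v).map Prod.fst)

theorem exists_add_not_mem (L : List ℤ) (x : ℤ) : ∃ q : ℕ, x + q ∉ L := by
  have h : ∃ q : ℕ, ∀ y ∈ L, y < x + q := by
    induction L with
    | nil => exact ⟨1, by simp⟩
    | cons a t ih =>
      obtain ⟨q, hq⟩ := ih
      refine ⟨q + (a - x).toNat + 1, ?_⟩
      intro y hy
      rcases List.mem_cons.mp hy with rfl | h
      · push_cast; omega
      · have := hq y h; push_cast; omega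
  obtain ⟨q, hq⟩ := h
  exact ⟨q, fun hmem => lt_irrefl _ (hq _ hmem)⟩

theorem exists_sub_not_mem (L : List ℤ) (x : ℤ) : ∃ q : ℕ, x - q ∉ L := by
  have h : ∃ q : ℕ, ∀ y ∈ L, x - q < y := by
    induction L with
    | nil => exact ⟨1, by simp⟩
    | cons a t ih =>
      obtain ⟨q, hq⟩ := ih
      refine ⟨q + (x - a).toNat + 1, ?_⟩
      intro y hy
      rcases List.mem_cons.mp hy with rfl | h
      · push_cast; omega
      · have := hq y h; push_cast; omega
  obtain ⟨q, hq⟩ := h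
  exact ⟨q, fun hmem => lt_irrefl _ (hq _ hmem)⟩

/-- The minimal `q ∈ ℕ` with `x + q ∉ L`. -/
def qUp (L : List ℤ) (x : ℤ) : ℕ := Nat.find (exists_add_not_mem L x)

/-- The minimal `q ∈ ℕ` with `x - q ∉ L`. -/
def qDown (L : List ℤ) (x : ℤ) : ℕ := Nat.find (exists_sub_not_mem L x)

/-- Reverse the prime on a primed letter. -/
def toggleP (p : PLetter) : PLetter := (p.1, !p.2)

/-- Toggle the prime on the occurrence of the letter `p` in a primed word. -/
def toggleIn (l : List PLetter) (p : PLetter) : List PLetter :=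
  l.map fun q => if q = p then toggleP q else q

/-- Swap the primes on a pair `(b, c)` with `b` in the first word and `c` in the second:
reverse both primes when exactly one of the two letters is primed. -/
def swapPairIn (uv : List PLetter × List PLetter) (bc : PLetter × PLetter) :
    List PLetter × List PLetter :=
  if bc.1.2 = bc.2.2 then uv else (toggleIn uv.1 bc.1, toggleIn uv.2 bc.2)

/-- Insert a letter into a decreasing primed word at the correct position. -/
def insertDecP (p : PLetter) : List PLetter → List PLetter
  | [] => [p]
  | q :: t => if pval q < pval p then p :: q :: t else q :: insertDecP p t

/-- The raising crystal operator acting on a consecutive pair of factors (primed version). -/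
def eStepP (u v : List PLetter) : Option (List PLetter × List PLetter) :=
  match unpairedSnd u v with
  | [] => none
  | x :: _ =>
    let q : ℕ := qUp (unprimeW u) x.1
    let toSwap := (pairsP u v).filter fun bc => decide (x.1 < bc.2.1 ∧ bc.2.1 ≤ x.1 + q)
    some (toSwap.foldl swapPairIn (insertDecP (x.1 + q, x.2) u, v.erase x))

/-- The lowering crystal operator acting on a consecutive pair of factors (primed version). -/
def fStepP (u v : List PLetter) : Option (List PLetter × List PLetter) :=
  match (unpairedFst u v).getLast? with
  | none => none
  | some y =>
    let q : ℕ := qDown (unprimeW v) y.1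
    let toSwap := (pairsP u v).filter fun bc => decide (y.1 - q ≤ bc.1.1 ∧ bc.1.1 < y.1)
    some (toSwap.foldl swapPairIn (u.erase y, insertDecP (y.1 - q, y.2) v))

/-- Apply a two-factor operator at position `(i, i+1)` of a factorization. -/
def applyAtP (g : List PLetter → List PLetter → Option (List PLetter × List PLetter))
    (i : ℕ) (a : ℕ → List PLetter) : Option (ℕ → List PLetter) :=
  (g (a i) (a (i + 1))).map fun uv =>
    Function.update (Function.update a i uv.1) (i + 1) uv.2

/-- The crystal operator `e` on primed factorizations acting on factors `i, i+1` (0-indexed). -/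
def eP (i : ℕ) (a : ℕ → List PLetter) : Option (ℕ → List PLetter) := applyAtP eStepP i a

/-- The crystal operator `f` on primed factorizations acting on factors `i, i+1` (0-indexed). -/
def fP (i : ℕ) (a : ℕ → List PLetter) : Option (ℕ → List PLetter) := applyAtP fStepP i a

/-! ### Crystal operators (unprimed version) -/

def findPairZ (c : ℤ) : List ℤ → Option ℤ × List ℤ
  | [] => (none, [])
  | b :: rest =>
      if b < c then (some b, rest)
      else
        let r := findPairZ c rest
        (r.1, b :: r.2)

def pairFoldZ (u : List ℤ) (vrev : List ℤ) : List (ℤ × ℤ) × List ℤ :=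
  vrev.foldl (fun st c =>
    match findPairZ c st.2 with
    | (none, r) => (st.1, r)
    | (some b, r) => ((b, c) :: st.1, r)) ([], u)

/-- The set `pair(u, v)` for integer words. -/
def pairsZ (u v : List ℤ) : List (ℤ × ℤ) := (pairFoldZ u v.reverse).1

def insertDecZ (x : ℤ) : List ℤ → List ℤ
  | [] => [x]
  | q :: t => if q < x then x :: q :: t else q :: insertDecZ x t

/-- The raising crystal operator on a consecutive pair of integer factors. -/
def eStepZ (u v : List ℤ) : Option (List ℤ × List ℤ) :=
  match v.filter (fun c => decide (c ∉ (pairsZ u v).map Prod.snd)) with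
  | [] => none
  | x :: _ =>
    let q : ℕ := qUp u x
    some (insertDecZ (x + q) u, v.erase x)

/-- The lowering crystal operator on a consecutive pair of integer factors. -/
def fStepZ (u v : List ℤ) : Option (List ℤ × List ℤ) :=
  match (u.filter (fun b => decide (b ∉ (pairsZ u v).map Prod.fst))).getLast? with
  | none => none
  | some y =>
    let q : ℕ := qDown v y
    some (u.erase y, insertDecZ (y - q) v)

def applyAtZ (g : List ℤ → List ℤ → Option (List ℤ × List ℤ))
    (i : ℕ) (a : ℕ → List ℤ) : Option (ℕ → List ℤ) :=
  (g (a i) (a (i + 1))).map fun uv =>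
    Function.update (Function.update a i uv.1) (i + 1) uv.2

/-- The crystal operator `e` acting on factors `i, i+1` (0-indexed) of an integer factorization,
so that `eZ i` is the paper's `e_{i+1}`. -/
def eZ (i : ℕ) (a : ℕ → List ℤ) : Option (ℕ → List ℤ) := applyAtZ eStepZ i a

/-- The crystal operator `f` acting on factors `i, i+1` (0-indexed). -/
def fZ (i : ℕ) (a : ℕ → List ℤ) : Option (ℕ → List ℤ) := applyAtZ fStepZ i a

/-! ### Coxeter–Knuth equivalence and tableaux -/

/-- One elementary Coxeter–Knuth move. -/
inductive CKStep : List ℤ → List ℤ → Prop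
  | acb (u v : List ℤ) {a b c : ℤ} (h1 : a < b) (h2 : b < c) :
      CKStep (u ++ a :: c :: b :: v) (u ++ c :: a :: b :: v)
  | bca (u v : List ℤ) {a b c : ℤ} (h1 : a < b) (h2 : b < c) :
      CKStep (u ++ b :: c :: a :: v) (u ++ b :: a :: c :: v)
  | braid (u v : List ℤ) {a b : ℤ} (h : b = a + 1 ∨ b = a - 1) :
      CKStep (u ++ a :: b :: a :: v) (u ++ b :: a :: b :: v)

/-- Coxeter–Knuth equivalence. -/
def CKEquiv : List ℤ → List ℤ → Prop := Relation.EqvGen CKStep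

/-- A tableau is recorded as its list of rows; its shape is the list of row lengths. -/
def shapeOf (T : List (List ℤ)) : List ℕ := T.map List.length

/-- The row reading word: rows left to right, starting with the last row. -/
def rowword (T : List (List ℤ)) : List ℤ := T.reverse.flatten

/-- The reverse row reading word. -/
def revrow (T : List (List ℤ)) : List ℤ := (rowword T).reverse

/-- The entry of `T` in row `i`, position `j` within the row (both 0-indexed). -/
def entryOf (T : List (List ℤ)) (i j : ℕ) : ℤ := (T.getD i []).getD j 0

/-- `T` has partition shape: rows nonempty with weakly decreasing lengths. -/
def IsPartShape (T : List (List ℤ)) : Prop :=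
  (∀ r ∈ T, r ≠ []) ∧ ∀ i, i + 1 < T.length → (T.getD (i + 1) []).length ≤ (T.getD i []).length

/-- An increasing tableau of partition shape. -/
def IncrTab (T : List (List ℤ)) : Prop :=
  IsPartShape T ∧ (∀ r ∈ T, r.Pairwise (· < ·)) ∧
  ∀ i j, i + 1 < T.length → j < (T.getD (i + 1) []).length → entryOf T i j < entryOf T (i + 1) j

/-- A decreasing tableau of partition shape. -/
def DecrTab (T : List (List ℤ)) : Prop :=
  IsPartShape T ∧ (∀ r ∈ T, r.Pairwise (fun x y => y < x)) ∧
  ∀ i j, i + 1 < T.length → j < (T.getD (i + 1) []).length → entryOf T (i + 1) j < entryOf T i j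

/-! ### Shifted tableaux -/

/-- Strict partition shape: rows nonempty with strictly decreasing lengths.  Row `i`
(0-indexed) of a shifted tableau occupies columns `i, i+1, …`. -/
def IsStrictShape (T : List (List ℤ)) : Prop :=
  (∀ r ∈ T, r ≠ []) ∧ ∀ i, i + 1 < T.length → (T.getD (i + 1) []).length < (T.getD i []).length

/-- An increasing shifted tableau: rows and columns strictly increase.  In row-list
coordinates, the entry of row `i+1` in within-row position `j` lies in the same column as the
entry of row `i` in within-row position `j+1`. -/
def ShIncrTab (T : List (List ℤ)) : Prop :=
  IsStrictShape T ∧ (∀ r ∈ T, r.Pairwise (· < ·)) ∧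
  ∀ i j, i + 1 < T.length → j < (T.getD (i + 1) []).length →
    entryOf T i (j + 1) < entryOf T (i + 1) j

/-- A decreasing shifted tableau. -/
def ShDecrTab (T : List (List ℤ)) : Prop :=
  IsStrictShape T ∧ (∀ r ∈ T, r.Pairwise (fun x y => y < x)) ∧
  ∀ i j, i + 1 < T.length → j < (T.getD (i + 1) []).length →
    entryOf T (i + 1) j < entryOf T i (j + 1)

/-! ### Young diagrams of partitions given as lists -/

/-- The Young diagram of a partition given as a list of row lengths (1-indexed positions). -/
def YDiagL (lam : List ℕ) : Set (ℤ × ℤ) :=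
  {p | 1 ≤ p.1 ∧ 1 ≤ p.2 ∧ p.2 ≤ (lam.getD (p.1 - 1).toNat 0 : ℤ)}

/-- The tableau `T_λ` with entry `i + j - 1` in each box `(i, j)` of `D_λ` (1-indexed). -/
def Tlam (lam : List ℕ) : List (List ℤ) :=
  lam.mapIdx fun i k => (List.range k).map fun j => ((i + j + 1 : ℕ) : ℤ)

/-! ### Fixed-point-free involutions -/

def fpfFun (i : ℤ) : ℤ := if Even i then i - 1 else i + 1

theorem fpfFun_involutive : Function.Involutive fpfFun := by
  intro i
  simp only [fpfFun, Int.even_iff]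
  split <;> split <;> omega

/-- The fixed-point-free involution `1_fpf : i ↦ i - (-1)^i`. -/
def onefpf : Equiv.Perm ℤ :=
  ⟨fpfFun, fpfFun, fpfFun_involutive, fpfFun_involutive⟩

/-- `I^fpf_ℤ`: the `S_ℤ`-conjugation orbit of `1_fpf`. -/
def IfpfZ : Set (Equiv.Perm ℤ) := {z | ∃ w ∈ SZSet, z = w⁻¹ * onefpf * w}

/-- `I^fpf_∞`: the `S_∞`-conjugation orbit of `1_fpf`. -/
def IfpfInfty : Set (Equiv.Perm ℤ) := {z | ∃ w ∈ SinftySet, z = w⁻¹ * onefpf * w}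

/-- `𝒜^Sp(z)`: minimal-length `w ∈ S_ℤ` with `z = w⁻¹ 1_fpf w`. -/
def ASp (z : Equiv.Perm ℤ) : Set (Equiv.Perm ℤ) :=
  {w | w ∈ SZSet ∧ z = w⁻¹ * onefpf * w ∧
       ∀ v ∈ SZSet, z = v⁻¹ * onefpf * v → lenOf w ≤ lenOf v}

/-- `R^Sp(z)`: the set of fpf-involution words for `z`. -/
def RSp (z : Equiv.Perm ℤ) : Set (List ℤ) := {l | ∃ w ∈ ASp z, IsReducedWord w l}

/-- The fpf-involution code `c^Sp_i(z)`. -/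
noncomputable def cSp (z : Equiv.Perm ℤ) (i : ℤ) : ℕ :=
  {j : ℤ | i < j ∧ z j < min i (z i)}.ncard

/-- `RF^Sp_n(z)`: symplectic reduced factorizations into at most `n` decreasing factors. -/
def RFSp (n : ℕ) (z : Equiv.Perm ℤ) : Set (ℕ → List ℤ) :=
  {a | (∀ i, ZDec (a i)) ∧ (∀ m, n ≤ m → a m = []) ∧ concatZ a n ∈ RSp z}

/-- `BRF^Sp_n(z)`: the bounded (by the standard flag) symplectic reduced factorizations:
every letter `m` of the factor in (0-indexed) position `i` satisfies `m ≥ i + 1`. -/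
def BRFSp (n : ℕ) (z : Equiv.Perm ℤ) : Set (ℕ → List ℤ) :=
  {a | a ∈ RFSp n z ∧ ∀ m, ∀ x ∈ a m, (m : ℤ) + 1 ≤ x}

/-! ### Symplectic Coxeter–Knuth equivalence -/

/-- The extra symplectic relations, affecting the first two letters. -/
inductive SpExtra : List ℤ → List ℤ → Prop
  | down (a : ℤ) (t : List ℤ) : SpExtra (a :: (a - 1) :: t) (a :: (a + 1) :: t)
  | comm (a b : ℤ) (t : List ℤ) (h : a % 2 = b % 2) : SpExtra (a :: b :: t) (b :: a :: t)

/-- Symplectic Coxeter–Knuth equivalence. -/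
def SpCKEquiv : List ℤ → List ℤ → Prop :=
  Relation.EqvGen (fun x y => CKStep x y ∨ SpExtra x y)

/-- `half_<(λ)` for a partition given as a list: positive values among `λ_i - i`. -/
def halfLtL (lam : List ℕ) : List ℕ :=
  ((List.range lam.length).map fun k => ((lam.getD k 0 : ℤ) - (k + 1)).toNat).filter
    fun m => decide (0 < m)

/-- The shifted tableau `T^Sp_λ` of shape `half_<(λ)` with entry `i + j` in box `(i,j) ∈ SD_μ`. -/
def TSpTab (lam : List ℕ) : List (List ℤ) :=
  (halfLtL lam).mapIdx fun k m => (List.range m).map fun t => ((2 * (k + 1) + t : ℕ) : ℤ)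

/-- Symmetric partition (list version): the diagram is invariant under transposition. -/
def SymmPartL (lam : List ℕ) : Prop :=
  ∀ p : ℤ × ℤ, p ∈ YDiagL lam ↔ (p.2, p.1) ∈ YDiagL lam

/-- Skew-symmetric partition (list version). -/
def SkewSymmPartL (lam : List ℕ) : Prop :=
  SymmPartL lam ∧ ∀ i : ℤ, (i, i) ∈ YDiagL lam → (i + 1, i + 1) ∉ YDiagL lam →
    (¬ ∃ mu : List ℕ, mu.Pairwise (· ≥ ·) ∧ YDiagL mu = YDiagL lam ∪ {(i, i + 1)} ∧
        YDiagL mu ≠ YDiagL lam) ∧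
    (¬ ∃ mu : List ℕ, mu.Pairwise (· ≥ ·) ∧ YDiagL mu = YDiagL lam \ {(i, i + 1)} ∧
        YDiagL mu ≠ YDiagL lam)

/-! ### Demazure product, orthogonal involution words -/

/-- One step of the Demazure product: multiply by `s_i` on the left if this increases length. -/
noncomputable def demStep (i : ℤ) (x : Equiv.Perm ℤ) : Equiv.Perm ℤ :=
  if lenOf x < lenOf (sT i * x) then sT i * x else x

/-- The Demazure product of the letters of a word. -/
noncomputable def demWordProd (l : List ℤ) : Equiv.Perm ℤ := l.foldr demStep 1

/-- `𝒜^O(z)`: minimal-length `w` with `z = w⁻¹ ∘ w` (Demazure product). -/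
def AO (z : Equiv.Perm ℤ) : Set (Equiv.Perm ℤ) :=
  {w | (∃ l : List ℤ, IsReducedWord w l ∧ demWordProd (l.reverse ++ l) = z) ∧
       ∀ v : Equiv.Perm ℤ, (∃ l : List ℤ, IsReducedWord v l ∧ demWordProd (l.reverse ++ l) = z) →
         lenOf w ≤ lenOf v}

/-- `Cyc(z) = {(a, b) : a < b = z(a)}`. -/
def CycSet (z : Equiv.Perm ℤ) : Set (ℤ × ℤ) := {p | p.1 < p.2 ∧ z p.1 = p.2}

/-- `R^O(z)`: the set of primed involution words for `z`. -/
def RO (z : Equiv.Perm ℤ) : Set (List PLetter) :=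
  {l | ∃ A ⊆ CycSet z, ∃ w ∈ AO z, IsPrimedReducedWord w l ∧ markedSet l = A}

/-- The involution code `c^O_i(z)`. -/
noncomputable def cO (z : Equiv.Perm ℤ) (i : ℤ) : ℕ :=
  {j : ℤ | i < j ∧ z j ≤ min i (z i)}.ncard

/-- `RF^O_n(z)`: orthogonal (primed) reduced factorizations into at most `n` factors. -/
def RFO (n : ℕ) (z : Equiv.Perm ℤ) : Set (ℕ → List PLetter) :=
  {a | (∀ i, PDec (a i)) ∧ (∀ m, n ≤ m → a m = []) ∧ concatP a n ∈ RO z}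

/-- The unprimed image `uRF^O_n(z)` of `RF^O_n(z)`. -/
def uRFO (n : ℕ) (z : Equiv.Perm ℤ) : Set (ℕ → List ℤ) := unprimeF '' RFO n z

/-! ### Primed and orthogonal Coxeter–Knuth equivalence -/

/-- One elementary primed Coxeter–Knuth move. -/
inductive PCKStep : List PLetter → List PLetter → Prop
  | swapACB (u v : List PLetter) {A B C : PLetter} (h1 : A.1 < B.1) (h2 : B.1 < C.1) :
      PCKStep (u ++ A :: C :: B :: v) (u ++ C :: A :: B :: v)
  | swapBCA (u v : List PLetter) {A B C : PLetter} (h1 : A.1 < B.1) (h2 : B.1 < C.1) :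
      PCKStep (u ++ B :: C :: A :: v) (u ++ B :: A :: C :: v)
  | braid00 (u v : List PLetter) {a b : ℤ} (h : b = a + 1 ∨ b = a - 1) :
      PCKStep (u ++ (a, false) :: (b, false) :: (a, false) :: v)
              (u ++ (b, false) :: (a, false) :: (b, false) :: v)
  | braid11 (u v : List PLetter) {a b : ℤ} (h : b = a + 1 ∨ b = a - 1) :
      PCKStep (u ++ (a, true) :: (b, true) :: (a, true) :: v)
              (u ++ (b, true) :: (a, true) :: (b, true) :: v)
  | mixA (u v : List PLetter) {a b : ℤ} (h : b = a + 1 ∨ b = a - 1) :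
      PCKStep (u ++ (a, true) :: (b, false) :: (a, false) :: v)
              (u ++ (b, false) :: (a, false) :: (b, true) :: v)
  | mixB (u v : List PLetter) {a b : ℤ} (h : b = a + 1 ∨ b = a - 1) :
      PCKStep (u ++ (a, false) :: (b, true) :: (a, false) :: v)
              (u ++ (b, false) :: (a, true) :: (b, false) :: v)
  | mixC (u v : List PLetter) {a b : ℤ} (h : b = a + 1 ∨ b = a - 1) :
      PCKStep (u ++ (a, true) :: (b, true) :: (a, false) :: v)
              (u ++ (b, false) :: (a, true) :: (b, true) :: v)
  | mixD (u v : List PLetter) {a b : ℤ} (h : b = a + 1 ∨ b = a - 1) :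
      PCKStep (u ++ (a, true) :: (b, false) :: (a, true) :: v)
              (u ++ (b, true) :: (a, false) :: (b, true) :: v)

/-- The extra orthogonal relations, affecting the first letters of words. -/
inductive OExtra : List PLetter → List PLetter → Prop
  | prime (a : ℤ) (w : List PLetter) : OExtra ((a, false) :: w) ((a, true) :: w)
  | comm00 (a b : ℤ) (w : List PLetter) :
      OExtra ((a, false) :: (b, false) :: w) ((b, false) :: (a, false) :: w)
  | comm01 (a b : ℤ) (w : List PLetter) :
      OExtra ((a, false) :: (b, true) :: w) ((b, false) :: (a, true) :: w)
  | comm10 (a b : ℤ) (w : List PLetter) :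
      OExtra ((a, true) :: (b, false) :: w) ((b, true) :: (a, false) :: w)
  | comm11 (a b : ℤ) (w : List PLetter) :
      OExtra ((a, true) :: (b, true) :: w) ((b, true) :: (a, true) :: w)

/-- Orthogonal Coxeter–Knuth equivalence. -/
def OCKEquiv : List PLetter → List PLetter → Prop :=
  Relation.EqvGen (fun x y => PCKStep x y ∨ OExtra x y)

/-- Increasing shifted tableau with primed entries: removing the primes yields an increasing
shifted tableau. -/
def ShIncrTabP (T : List (List PLetter)) : Prop := ShIncrTab (T.map unprimeW)

/-- Decreasing shifted tableau with primed entries. -/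
def ShDecrTabP (T : List (List PLetter)) : Prop := ShDecrTab (T.map unprimeW)

/-- No primed entries on the main diagonal (the first entry of each row). -/
def DiagUnprimed (T : List (List PLetter)) : Prop :=
  ∀ r ∈ T, ∀ p : PLetter, r.head? = some p → p.2 = false

/-- The row reading word of a primed shifted tableau. -/
def rowwordP (T : List (List PLetter)) : List PLetter := T.reverse.flatten

/-- The shape of a primed tableau. -/
def shapeOfP (T : List (List PLetter)) : List ℕ := T.map List.length

/-! ### Iterated partial operators -/

def iterOpt {α : Type*} (g : α → Option α) : ℕ → α → Option α
  | 0, a => some a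
  | m + 1, a => (g a).bind (iterOpt g m)

/-! ### Weak compositions as functions `ℤ → ℕ` supported on positive integers -/

/-- A weak composition: nonnegative entries indexed by positive integers, finitely supported. -/
def WeakCompF (α : ℤ → ℕ) : Prop :=
  (∀ i ≤ 0, α i = 0) ∧ ∃ N : ℤ, ∀ i, N ≤ i → α i = 0

/-- A partition: a weakly decreasing weak composition. -/
def IsPartitionFun (lam : ℤ → ℕ) : Prop :=
  WeakCompF lam ∧ ∀ i : ℤ, 1 ≤ i → lam (i + 1) ≤ lam i

/-- `lam` is the decreasing rearrangement `λ(α)` of `α`: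
it is a partition with the same part multiplicities. -/
def IsDecRearr (α lam : ℤ → ℕ) : Prop :=
  IsPartitionFun lam ∧ ∀ k : ℕ, 0 < k →
    {i : ℤ | 1 ≤ i ∧ k ≤ α i}.ncard = {i : ℤ | 1 ≤ i ∧ k ≤ lam i}.ncard

/-- The Young diagram of a partition function (1-indexed positions). -/
def YDiag (lam : ℤ → ℕ) : Set (ℤ × ℤ) :=
  {p | 1 ≤ p.1 ∧ 1 ≤ p.2 ∧ p.2 ≤ (lam p.1 : ℤ)}

/-- Symmetric partition: diagram invariant under transposition. -/
def SymmPartF (lam : ℤ → ℕ) : Prop :=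
  IsPartitionFun lam ∧ ∀ p : ℤ × ℤ, p ∈ YDiag lam ↔ (p.2, p.1) ∈ YDiag lam

/-- Skew-symmetric partition. -/
def SkewSymmPartF (lam : ℤ → ℕ) : Prop :=
  SymmPartF lam ∧ ∀ i : ℤ, (i, i) ∈ YDiag lam → (i + 1, i + 1) ∉ YDiag lam →
    (¬ ∃ mu : ℤ → ℕ, IsPartitionFun mu ∧ YDiag mu = YDiag lam ∪ {(i, i + 1)} ∧
        YDiag mu ≠ YDiag lam) ∧
    (¬ ∃ mu : ℤ → ℕ, IsPartitionFun mu ∧ YDiag mu = YDiag lam \ {(i, i + 1)} ∧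
        YDiag mu ≠ YDiag lam)

/-- The Demazure action of a simple transposition on weak compositions:
sort the entries in positions `i, i+1` into weakly increasing order. -/
def sComp (i : ℤ) (β : ℤ → ℕ) : ℤ → ℕ :=
  if β (i + 1) < β i then
    (fun j => if j = i then β (i + 1) else if j = i + 1 then β i else β j)
  else β

/-- The Demazure action of a word on a weak composition (rightmost letter acts first). -/
def demCompAct (l : List ℤ) (β : ℤ → ℕ) : ℤ → ℕ := l.foldr sComp β

/-- `u = u(α)`: the minimal-length permutation with `α = u ∘ λ(α)` under the Demazure action. -/
def IsUofAlpha (α lam : ℤ → ℕ) (u : Equiv.Perm ℤ) : Prop :=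
  u ∈ SinftySet ∧ (∃ l : List ℤ, IsReducedWord u l ∧ demCompAct l lam = α) ∧
  ∀ v ∈ SinftySet, (∃ l : List ℤ, IsReducedWord v l ∧ demCompAct l lam = α) → lenOf u ≤ lenOf v

/-! ### Isobaric divided differences, Schubert polynomials -/

/-- `g = π_i f`, i.e. `(x_i - x_{i+1}) g = x_i f - x_{i+1} (s_i f)`. -/
def IsPiApply (i : ℤ) (f g : MvPolynomial ℤ ℤ) : Prop :=
  (X i - X (i + 1)) * g = X i * f - X (i + 1) * MvPolynomial.rename (sT i) f

/-- `g = π_{i_1} π_{i_2} ⋯ π_{i_k} f` for the word `l = [i_1, …, i_k]`. -/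
inductive IsPiWord : List ℤ → MvPolynomial ℤ ℤ → MvPolynomial ℤ ℤ → Prop
  | nil (f : MvPolynomial ℤ ℤ) : IsPiWord [] f f
  | cons (i : ℤ) (t : List ℤ) (f h g : MvPolynomial ℤ ℤ) :
      IsPiWord t f h → IsPiApply i h g → IsPiWord (i :: t) f g

/-- The dominant monomial `x^λ = ∏_{k=1}^{M} x_k^{λ_k}`. -/
noncomputable def xpow (lam : ℤ → ℕ) (M : ℕ) : MvPolynomial ℤ ℤ :=
  ∏ k ∈ Finset.range M, (X ((k : ℤ) + 1) : MvPolynomial ℤ ℤ) ^ lam ((k : ℤ) + 1)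

/-- The defining axioms of the family of Schubert polynomials `{𝔖_w}_{w ∈ S_∞}`:
`𝔖_w = x^λ` for `w` dominant of shape `λ`, and
`∂_i 𝔖_w = 𝔖_{w s_i}` whenever `w(i) > w(i+1)` (cleared of denominators). -/
def IsSchubertFamily (Sf : Equiv.Perm ℤ → MvPolynomial ℤ ℤ) : Prop :=
  (∀ w ∈ SinftySet, ∀ lam : ℤ → ℕ, IsPartitionFun lam → RotheD w = YDiag lam →
     ∀ M : ℕ, (∀ i : ℤ, (M : ℤ) < i → lam i = 0) → Sf w = xpow lam M) ∧
  (∀ w ∈ SinftySet, ∀ i : ℤ, 1 ≤ i → w (i + 1) < w i →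
     (X i - X (i + 1)) * Sf (w * sT i) = Sf w - MvPolynomial.rename (sT i) (Sf w))

/-- Substituting `x_m = 0` for all `m > n` in a polynomial. -/
noncomputable def restrictVars (n : ℕ) (g : MvPolynomial ℤ ℤ) : MvPolynomial ℤ ℤ :=
  (MvPolynomial.aeval fun m : ℤ => if m ≤ (n : ℤ) then (X m : MvPolynomial ℤ ℤ) else 0) g

/-! ### Queer crystal operators `ē_1`, `f̄_1`, `σ_i` on symplectic factorizations -/

/-- Insert a letter directly after the first letter of a list. -/
def insertAfterFirst (c : ℤ) : List ℤ → List ℤ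
  | [] => [c]
  | x :: t => x :: c :: t

/-- The operator `ē_1` on symplectic reduced factorizations. -/
def e1barOp (a : ℕ → List ℤ) : Option (ℕ → List ℤ) :=
  match a 1 with
  | [] => none
  | y :: s =>
    if ∀ x ∈ a 0, x < y then
      if Even y then
        some (Function.update (Function.update a 1 s) 0 (y :: a 0))
      else
        some (Function.update (Function.update a 1 s) 0 (insertAfterFirst (y - 2) (a 0)))
    else none

/-- The operator `f̄_1` on symplectic reduced factorizations. -/
def f1barOp (a : ℕ → List ℤ) : Option (ℕ → List ℤ) :=
  match a 0 with
  | [] => none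
  | x :: _ =>
    if ∀ y ∈ a 1, y < x then
      if (x - 1) ∈ a 0 then
        some (Function.update (Function.update a 0 ((a 0).erase (x - 1))) 1 ((x + 1) :: a 1))
      else
        some (Function.update (Function.update a 0 ((a 0).erase x)) 1 (x :: a 1))
    else none

/-- The string-reversing operator `σ` acting on factors `i, i+1` (0-indexed):
apply `f^k` where `k = wt_i - wt_{i+1}` if `k ≥ 0`, and `e^{-k}` otherwise. -/
def sigZ (i : ℕ) (a : ℕ → List ℤ) : Option (ℕ → List ℤ) :=
  if (a (i + 1)).length ≤ (a i).length then
    iterOpt (fZ i) ((a i).length - (a (i + 1)).length) a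
  else
    iterOpt (eZ i) ((a (i + 1)).length - (a i).length) a

/-- The operators `ē_{j+1}` (0-indexed `j`), defined by
`ē_i = σ_{i-1} σ_i ē_{i-1} σ_i σ_{i-1}`. -/
def ebarOp : ℕ → (ℕ → List ℤ) → Option (ℕ → List ℤ)
  | 0 => e1barOp
  | j + 1 => fun a =>
      (sigZ j a).bind fun b => (sigZ (j + 1) b).bind fun c =>
        (ebarOp j c).bind fun d => (sigZ (j + 1) d).bind (sigZ j)

/-- The operators `f̄_{j+1}` (0-indexed `j`). -/
def fbarOp : ℕ → (ℕ → List ℤ) → Option (ℕ → List ℤ)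
  | 0 => f1barOp
  | j + 1 => fun a =>
      (sigZ j a).bind fun b => (sigZ (j + 1) b).bind fun c =>
        (fbarOp j c).bind fun d => (sigZ (j + 1) d).bind (sigZ j)

/-! ### Crystal Demazure operators on symplectic factorizations -/

/-- The crystal Demazure operator `𝔇_i` (paper-indexed `i ∈ [n-1]`) inside the ambient
crystal `RF^Sp_n(z)`:  all `b` with `e_i^m(b) ∈ X` for some `m ∈ ℕ`. -/
def DOpSp (n : ℕ) (z : Equiv.Perm ℤ) (i : ℤ) (Xs : Set (ℕ → List ℤ)) : Set (ℕ → List ℤ) :=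
  {b | b ∈ RFSp n z ∧ ∃ m : ℕ, ∃ b', iterOpt (eZ (i - 1).toNat) m b = some b' ∧ b' ∈ Xs}

/-- `𝔇_{i_1} 𝔇_{i_2} ⋯ 𝔇_{i_k} X` for the word `l = [i_1, …, i_k]`. -/
def DemFoldSp (n : ℕ) (z : Equiv.Perm ℤ) (l : List ℤ) (Xs : Set (ℕ → List ℤ)) :
    Set (ℕ → List ℤ) :=
  l.foldr (fun i Y => DOpSp n z i Y) Xs
@[simp] lemma wordProd_nil : wordProd [] = 1 := rfl
@[simp] lemma wordProd_cons (i : ℤ) (t : List ℤ) : wordProd (i :: t) = sT i * wordProd t := by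
  simp [wordProd]
@[simp] lemma wordProd_append (u v : List ℤ) : wordProd (u ++ v) = wordProd u * wordProd v := by
  simp [wordProd]
@[simp] lemma sT_sq (i : ℤ) : sT i * sT i = 1 := Equiv.swap_mul_self _ _
@[simp] lemma sT_inv (i : ℤ) : (sT i)⁻¹ = sT i := by simp [sT]
lemma wordProd_reverse (l : List ℤ) : wordProd l.reverse = (wordProd l)⁻¹ := by
  induction l with
  | nil => simp
  | cons i t ih => simp [ih, mul_inv_rev]

lemma mem_invSet (w : Equiv.Perm ℤ) (x y : ℤ) : (x, y) ∈ InvSet w ↔ x < y ∧ w y < w x :=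
  Iff.rfl

lemma sT_lt_sT (i p q : ℤ) (h : p ≠ q) :
    (sT i p < sT i q ↔ (if (p = i ∧ q = i+1) ∨ (p = i+1 ∧ q = i) then q < p else p < q)) := by
  simp only [sT, Equiv.swap_apply_def]
  split_ifs <;> omega

lemma exists_bound (l : List ℤ) : ∃ N : ℤ, 0 ≤ N ∧ ∀ x : ℤ, x < -N ∨ N < x → wordProd l x = x := by
  induction l with
  | nil => exact ⟨0, le_refl _, fun x _ => rfl⟩
  | cons i t ih =>
    obtain ⟨N, hN0, hN⟩ := ih
    refine ⟨max N (|i| + 1), le_trans hN0 (le_max_left _ _), fun x hx => ?_⟩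
    have hl := le_max_left N (|i|+1)
    have hr := le_max_right N (|i|+1)
    have habs : -|i| ≤ i ∧ i ≤ |i| := ⟨neg_abs_le i, le_abs_self i⟩
    have h1 : wordProd t x = x := hN x (by omega)
    have hx1 : x ≠ i := by omega
    have hx2 : x ≠ i + 1 := by omega
    rw [wordProd_cons, Equiv.Perm.mul_apply, h1, sT, Equiv.swap_apply_of_ne_of_ne hx1 hx2]

lemma strictMono_diff {v : ℤ → ℤ} (hm : StrictMono v) : ∀ (k : ℕ) (x : ℤ), (k : ℤ) ≤ v (x + k) - v x := by
  intro k
  induction k with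
  | zero => intro x; simp
  | succ k ih =>
    intro x
    have h1 : v (x + k) + 1 ≤ v (x + k + 1) := Int.add_one_le_iff.mpr (hm (lt_add_one _))
    have h2 := ih x
    have e : x + ((k : ℤ) + 1) = x + k + 1 := by ring
    push_cast
    rw [e]
    omega

lemma eq_one_of_no_descent (v : Equiv.Perm ℤ) (N : ℤ)
    (hfix : ∀ x : ℤ, x < -N ∨ N < x → v x = x) (h : ∀ i : ℤ, v i < v (i + 1)) : v = 1 := by
  have hm : StrictMono (fun x => v x) := strictMono_int_of_lt_succ h
  have key : ∀ x y : ℤ, x ≤ y → y - x ≤ v y - v x := by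
    intro x y hxy
    have := strictMono_diff hm (y - x).toNat x
    rw [Int.toNat_of_nonneg (by omega)] at this
    simpa using this
  by_cases hN0 : 0 ≤ N
  · have hlow : v (-(N+1)) = -(N+1) := hfix _ (by left; omega)
    have hhigh : v (N+1) = N+1 := hfix _ (by right; omega)
    ext x
    by_cases h1 : x < -N ∨ N < x
    · simp [hfix x h1]
    · push_neg at h1
      have hge := key (-(N+1)) x (by omega)
      have hle := key x (N+1) (by omega)
      rw [hlow] at hge; rw [hhigh] at hle
      simp
      omega
  · ext x
    simp [hfix x (by omega)]

lemma invSet_one : InvSet 1 = ∅ := by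
  ext ⟨x, y⟩; simp [InvSet]; omega

lemma exists_descent (u : Equiv.Perm ℤ) (N : ℤ)
    (hfix : ∀ x : ℤ, x < -N ∨ N < x → u x = x) (hu : u ≠ 1) : ∃ i : ℤ, u (i+1) < u i := by
  by_contra hc
  push_neg at hc
  refine hu (eq_one_of_no_descent u N hfix fun i => ?_)
  have := hc i
  have hne : u i ≠ u (i+1) := fun e => by have := u.injective e; omega
  omega

lemma invSet_finite (u : Equiv.Perm ℤ) (N : ℤ) (hfix : ∀ x : ℤ, x < -N ∨ N < x → u x = x) :
    (InvSet u).Finite := by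
  apply Set.Finite.subset ((Set.finite_Icc (-N) N).prod (Set.finite_Icc (-N) N))
  rintro ⟨x, y⟩ hmem
  rw [mem_invSet] at hmem
  obtain ⟨hxy, hinv⟩ := hmem
  simp only [Set.mem_prod, Set.mem_Icc]
  have fixfix : ∀ z : ℤ, (u z < -N ∨ N < u z) → u z = z := by
    intro z hz
    have : u (u z) = u z := hfix _ hz
    exact u.injective this
  refine ⟨⟨?_, ?_⟩, ?_, ?_⟩
  · by_contra h
    push_neg at h
    have hx : u x = x := hfix x (Or.inl h)
    have := fixfix y (Or.inl (by omega))
    omega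
  · by_contra h
    push_neg at h
    have hx : u x = x := hfix x (Or.inr h)
    have hy : u y = y := hfix y (Or.inr (by omega))
    omega
  · by_contra h; push_neg at h
    have hy : u y = y := hfix y (Or.inl h)
    have hx : u x = x := hfix x (Or.inl (by omega))
    omega
  · by_contra h; push_neg at h
    have hy : u y = y := hfix y (Or.inr h)
    have := fixfix x (Or.inr (by omega))
    omega

lemma sT_mul_lt_iff (u : Equiv.Perm ℤ) {i a b : ℤ} (hua : u a = i) (hub : u b = i + 1)
    (x y : ℤ) (hxy : x ≠ y) : ((sT i * u) x < (sT i * u) y ↔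
      (if (x = a ∧ y = b) ∨ (x = b ∧ y = a) then u y < u x else u x < u y)) := by
  subst hua
  have hne : u x ≠ u y := fun e => hxy (u.injective e)
  rw [Equiv.Perm.mul_apply, Equiv.Perm.mul_apply, sT_lt_sT _ _ _ hne, ← hub]
  simp only [Equiv.apply_eq_iff_eq]

lemma invSet_mul_sT_asc (u : Equiv.Perm ℤ) {i a b : ℤ} (hua : u a = i) (hub : u b = i + 1)
    (hab : a < b) :
    InvSet (sT i * u) = insert (a, b) (InvSet u) ∧ (a, b) ∉ InvSet u := by
  have hmem : (a, b) ∉ InvSet u := by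
    rw [mem_invSet]; omega
  refine ⟨?_, hmem⟩
  ext ⟨x, y⟩
  rw [mem_invSet, Set.mem_insert_iff, mem_invSet, Prod.mk.injEq]
  constructor
  · rintro ⟨hxy, hlt⟩
    rw [sT_mul_lt_iff u hua hub y x (by omega)] at hlt
    split_ifs at hlt with hcase
    · rcases hcase with ⟨h1, h2⟩ | ⟨h1, h2⟩
      · omega
      · left; exact ⟨h2, h1⟩
    · right; exact ⟨hxy, hlt⟩
  · rintro (⟨rfl, rfl⟩ | ⟨hxy, hlt⟩)
    · refine ⟨hab, ?_⟩
      rw [sT_mul_lt_iff u hua hub y x (by omega), if_pos (Or.inr ⟨rfl, rfl⟩)]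
      omega
    · refine ⟨hxy, ?_⟩
      rw [sT_mul_lt_iff u hua hub y x (by omega)]
      split_ifs with hcase
      · rcases hcase with ⟨h1, h2⟩ | ⟨h1, h2⟩ <;> subst h1 <;> subst h2 <;> omega
      · exact hlt

lemma invSet_mul_sT_desc (u : Equiv.Perm ℤ) {i a b : ℤ} (hua : u a = i) (hub : u b = i + 1)
    (hab : b < a) :
    InvSet (sT i * u) = InvSet u \ {(b, a)} ∧ (b, a) ∈ InvSet u := by
  have hmem : (b, a) ∈ InvSet u := by
    rw [mem_invSet]; omega
  refine ⟨?_, hmem⟩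
  ext ⟨x, y⟩
  rw [mem_invSet, Set.mem_diff, mem_invSet, Set.mem_singleton_iff, Prod.mk.injEq]
  constructor
  · rintro ⟨hxy, hlt⟩
    rw [sT_mul_lt_iff u hua hub y x (by omega)] at hlt
    split_ifs at hlt with hcase
    · rcases hcase with ⟨h1, h2⟩ | ⟨h1, h2⟩
      · subst h1; subst h2; omega
      · omega
    · refine ⟨⟨hxy, hlt⟩, ?_⟩
      rintro ⟨rfl, rfl⟩
      exact hcase (Or.inl ⟨rfl, rfl⟩)
  · rintro ⟨⟨hxy, hlt⟩, hne⟩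
    refine ⟨hxy, ?_⟩
    rw [sT_mul_lt_iff u hua hub y x (by omega)]
    split_ifs with hcase
    · rcases hcase with ⟨h1, h2⟩ | ⟨h1, h2⟩
      · exact absurd ⟨h2, h1⟩ hne
      · omega
    · exact hlt

lemma wordProd_finite_inv (l : List ℤ) : (InvSet (wordProd l)).Finite := by
  obtain ⟨N, _, hN⟩ := exists_bound l
  exact invSet_finite _ N hN

lemma exists_word_of_ncard : ∀ (n : ℕ) (u : Equiv.Perm ℤ), (∃ m : List ℤ, wordProd m = u) →
    (InvSet u).ncard = n → ∃ m : List ℤ, wordProd m = u ∧ m.length = n := by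
  intro n
  induction n with
  | zero =>
    rintro u ⟨m, rfl⟩ hcard
    have hfin := wordProd_finite_inv m
    have hempty : InvSet (wordProd m) = ∅ := by
      exact (Set.ncard_eq_zero hfin).mp hcard
    have h1 : wordProd m = 1 := by
      obtain ⟨N, _, hN⟩ := exists_bound m
      apply eq_one_of_no_descent _ N hN
      intro i
      have hni : ((i : ℤ), i+1) ∉ InvSet (wordProd m) := by rw [hempty]; exact Set.notMem_empty _
      rw [mem_invSet] at hni
      push_neg at hni
      have := hni (by omega)
      have hne : wordProd m i ≠ wordProd m (i+1) :=
        fun e => by have := (wordProd m).injective e; omega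
      omega
    exact ⟨[], by rw [wordProd_nil, h1], rfl⟩
  | succ n ih =>
    rintro u ⟨m, rfl⟩ hcard
    have hfin := wordProd_finite_inv m
    have hne1 : wordProd m ≠ 1 := by
      intro e
      rw [e, invSet_one] at hcard
      simp at hcard
    have hinvne1 : (wordProd m)⁻¹ ≠ 1 := fun e => hne1 (by
      have := congrArg (·⁻¹) e; simpa using this)
    obtain ⟨N, _, hN⟩ := exists_bound m.reverse
    rw [wordProd_reverse] at hN
    obtain ⟨i, hi⟩ := exists_descent _ N hN hinvne1
    set u := wordProd m
    have hd := invSet_mul_sT_desc u (i := i) (a := u⁻¹ i) (b := u⁻¹ (i+1)) (by simp) (by simp) hi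
    have hcard' : (InvSet (sT i * u)).ncard = n := by
      rw [hd.1, Set.ncard_diff_singleton_of_mem hd.2, hcard]
      omega
    obtain ⟨m', hm', hlen⟩ := ih (sT i * u) ⟨i :: m, by simp [u]⟩ hcard'
    refine ⟨i :: m', ?_, by simp [hlen]⟩
    rw [wordProd_cons, hm', ← mul_assoc, sT_sq, one_mul]

/-- The inversion pair associated to position `j` of the word `l`. -/
def pairAt (l : List ℤ) (j : ℕ) : ℤ × ℤ :=
  (wordProd ((l.drop (j+1)).reverse) (l.getD j 0),
   wordProd ((l.drop (j+1)).reverse) (l.getD j 0 + 1))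

lemma pairAt_zero (x : ℤ) (t : List ℤ) :
    pairAt (x :: t) 0 = ((wordProd t)⁻¹ x, (wordProd t)⁻¹ (x+1)) := by
  simp [pairAt, wordProd_reverse]

lemma pairAt_succ (x : ℤ) (t : List ℤ) (j : ℕ) : pairAt (x :: t) (j+1) = pairAt t j := by
  simp [pairAt]

/-- The key lemma: for a reduced word, the pairs `pairAt` are increasing, pairwise distinct,
and enumerate the inversion set. -/
lemma main_pairs : ∀ (l : List ℤ),
    (∀ m : List ℤ, wordProd m = wordProd l → l.length ≤ m.length) →
    (∀ j < l.length, (pairAt l j).1 < (pairAt l j).2) ∧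
    (∀ j < l.length, ∀ k < l.length, pairAt l j = pairAt l k → j = k) ∧
    ({p | ∃ j < l.length, pairAt l j = p} = InvSet (wordProd l)) := by
  intro l
  induction l with
  | nil =>
    intro _
    refine ⟨by simp, by simp, ?_⟩
    rw [wordProd_nil, invSet_one]
    ext p; simp
  | cons x t ih =>
    intro hmin
    have htmin : ∀ m : List ℤ, wordProd m = wordProd t → t.length ≤ m.length := by
      intro m hm
      have := hmin (x :: m) (by rw [wordProd_cons, wordProd_cons, hm])
      simpa using this
    obtain ⟨ih1, ih2, ih3⟩ := ih htmin
    set u := wordProd t with hu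
    set a := u⁻¹ x with ha
    set b := u⁻¹ (x+1) with hb
    have hua : u a = x := by simp [ha]
    have hub : u b = x + 1 := by simp [hb]
    have hfin : (InvSet u).Finite := wordProd_finite_inv t
    have hcardu : (InvSet u).ncard = t.length := by
      rw [← ih3]
      have himg : {p | ∃ j < t.length, pairAt t j = p} = pairAt t '' Set.Iio t.length := by
        ext p
        simp [Set.mem_image, Set.mem_Iio, Set.mem_setOf_eq]
      rw [himg, Set.ncard_image_of_injOn (s := Set.Iio t.length) (f := pairAt t)
        (fun j hj k hk e => ih2 j (Set.mem_Iio.mp hj) k (Set.mem_Iio.mp hk) e),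
        Set.ncard_Iio_nat]
    have hab : a ≠ b := by
      intro e
      have : u a = u b := by rw [e]
      omega
    have hasc : a < b := by
      by_contra hdesc
      push_neg at hdesc
      have hba : b < a := lt_of_le_of_ne hdesc (fun e => hab e.symm)
      have hd := invSet_mul_sT_desc u hua hub hba
      have hcard' : (InvSet (sT x * u)).ncard = t.length - 1 := by
        rw [hd.1, Set.ncard_diff_singleton_of_mem hd.2, hcardu]
      have htpos : 1 ≤ t.length := by
        have := hd.2
        have hnonempty : (InvSet u).Nonempty := ⟨_, this⟩
        rw [← Set.ncard_pos hfin] at hnonempty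
        omega
      obtain ⟨m, hm, hlen⟩ := exists_word_of_ncard (t.length - 1) (sT x * u)
        ⟨x :: t, by rw [wordProd_cons]⟩ hcard'
      have := hmin m (by rw [hm, wordProd_cons])
      simp at this
      omega
    have hA := invSet_mul_sT_asc u hua hub hasc
    have hlen : (x :: t).length = t.length + 1 := rfl
    have hpz : pairAt (x :: t) 0 = (a, b) := pairAt_zero x t
    refine ⟨?_, ?_, ?_⟩
    · intro j hj
      cases j with
      | zero => rw [hpz]; exact hasc
      | succ j =>
        rw [pairAt_succ]
        exact ih1 j (by simpa using hj)
    · intro j hj k hk he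
      cases j with
      | zero =>
        cases k with
        | zero => rfl
        | succ k =>
          rw [hpz, pairAt_succ] at he
          exfalso
          have : pairAt t k ∈ InvSet u := by
            rw [← ih3]; exact ⟨k, by simpa using hk, rfl⟩
          rw [← he] at this
          exact hA.2 this
      | succ j =>
        cases k with
        | zero =>
          rw [hpz, pairAt_succ] at he
          exfalso
          have : pairAt t j ∈ InvSet u := by
            rw [← ih3]; exact ⟨j, by simpa using hj, rfl⟩
          rw [he] at this
          exact hA.2 this
        | succ k =>
          rw [pairAt_succ, pairAt_succ] at he
          have := ih2 j (by simpa using hj) k (by simpa using hk) he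
          omega
    · rw [wordProd_cons, ← hu, hA.1, ← ih3]
      ext p
      simp only [Set.mem_setOf_eq, Set.mem_insert_iff]
      constructor
      · rintro ⟨j, hj, rfl⟩
        cases j with
        | zero => left; rw [hpz]
        | succ j => right; exact ⟨j, by simpa using hj, by rw [pairAt_succ]⟩
      · rintro (rfl | ⟨j, hj, rfl⟩)
        · exact ⟨0, by simp, hpz⟩
        · exact ⟨j + 1, by simpa using hj, pairAt_succ x t j⟩

/-! #### unprimeW basics -/

@[simp] lemma unprimeW_nil : unprimeW [] = [] := rfl
@[simp] lemma unprimeW_cons (p : PLetter) (t : List PLetter) :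
    unprimeW (p :: t) = p.1 :: unprimeW t := rfl
@[simp] lemma unprimeW_append (u v : List PLetter) :
    unprimeW (u ++ v) = unprimeW u ++ unprimeW v := List.map_append
@[simp] lemma unprimeW_reverse (u : List PLetter) :
    unprimeW u.reverse = (unprimeW u).reverse := List.map_reverse
@[simp] lemma unprimeW_length (u : List PLetter) :
    (unprimeW u).length = u.length := List.length_map _
lemma mem_unprimeW {x : ℤ} {u : List PLetter} : x ∈ unprimeW u ↔ ∃ p ∈ u, p.1 = x := by
  simp [unprimeW]

/-! #### Pairing simulation -/

def pstep (st : List (PLetter × PLetter) × List PLetter) (c : PLetter) :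
    List (PLetter × PLetter) × List PLetter :=
  match findPairP c.1 st.2 with
  | (none, r) => (st.1, r)
  | (some b, r) => ((b, c) :: st.1, r)

def zstep (st : List (ℤ × ℤ) × List ℤ) (c : ℤ) : List (ℤ × ℤ) × List ℤ :=
  match findPairZ c st.2 with
  | (none, r) => (st.1, r)
  | (some b, r) => ((b, c) :: st.1, r)

lemma pairFoldP_eq (u vrev : List PLetter) : pairFoldP u vrev = vrev.foldl pstep ([], u) := rfl
lemma pairFoldZ_eq (u vrev : List ℤ) : pairFoldZ u vrev = vrev.foldl zstep ([], u) := rfl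

def ppr : PLetter × PLetter → ℤ × ℤ := Prod.map Prod.fst Prod.fst

lemma findPair_sim (c : ℤ) (l : List PLetter) :
    findPairZ c (unprimeW l) = (((findPairP c l).1).map Prod.fst, unprimeW (findPairP c l).2) := by
  induction l with
  | nil => rfl
  | cons b rest ih =>
    rw [show unprimeW (b :: rest) = b.1 :: unprimeW rest from rfl]
    by_cases h : b.1 < c
    · simp [findPairZ, findPairP, h]
    · simp [findPairZ, findPairP, h, ih]

lemma step_sim (st : List (PLetter × PLetter) × List PLetter) (c : PLetter) :
    zstep (st.1.map ppr, unprimeW st.2) c.1 = ((pstep st c).1.map ppr, unprimeW (pstep st c).2) := by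
  have hs := findPair_sim c.1 st.2
  rcases h : findPairP c.1 st.2 with ⟨o, r⟩
  rw [h] at hs
  cases o <;> simp [zstep, pstep, hs, h, ppr]

lemma fold_sim (vr : List PLetter) :
    ∀ (st : List (PLetter × PLetter) × List PLetter),
    (vr.map Prod.fst).foldl zstep (st.1.map ppr, unprimeW st.2) =
      ((vr.foldl pstep st).1.map ppr, unprimeW (vr.foldl pstep st).2) := by
  induction vr with
  | nil => intro st; rfl
  | cons c vr ih =>
    intro st
    simp only [List.map_cons, List.foldl_cons]
    rw [step_sim st c]
    exact ih (pstep st c)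

lemma pairsZ_sim (u v : List PLetter) :
    pairsZ (unprimeW u) (unprimeW v) = (pairsP u v).map ppr := by
  unfold pairsZ pairsP
  rw [pairFoldZ_eq, pairFoldP_eq]
  have h1 : (unprimeW v).reverse = (v.reverse).map Prod.fst := by
    rw [← unprimeW_reverse]; rfl
  rw [h1]
  have h2 := fold_sim v.reverse ([], u)
  simp only [List.map_nil] at h2
  rw [h2]

lemma findPairP_fst_mem (l : List PLetter) (c : ℤ) (b : PLetter)
    (h : (findPairP c l).1 = some b) : b ∈ l := by
  induction l with
  | nil => simp [findPairP] at h
  | cons a rest ih =>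
    by_cases hc : a.1 < c
    · simp [findPairP, hc] at h
      simp [h]
    · simp [findPairP, hc] at h
      exact List.mem_cons_of_mem _ (ih h)

lemma findPairP_snd_mem (l : List PLetter) (c : ℤ) (q : PLetter)
    (h : q ∈ (findPairP c l).2) : q ∈ l := by
  induction l with
  | nil => simp [findPairP] at h
  | cons a rest ih =>
    by_cases hc : a.1 < c
    · simp [findPairP, hc] at h
      exact List.mem_cons_of_mem _ h
    · simp [findPairP, hc] at h
      rcases h with rfl | h
      · exact List.mem_cons_self
      · exact List.mem_cons_of_mem _ (ih h)

lemma pstep_fst_mem (st : List (PLetter × PLetter) × List PLetter) (c : PLetter)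
    (p : PLetter × PLetter) (hp : p ∈ (pstep st c).1) :
    p ∈ st.1 ∨ (p.1 ∈ st.2 ∧ p.2 = c) := by
  unfold pstep at hp
  rcases h : findPairP c.1 st.2 with ⟨o, r⟩
  rw [h] at hp
  cases o with
  | none => exact Or.inl hp
  | some b =>
    simp at hp
    rcases hp with ⟨rfl, rfl⟩ | hp
    · exact Or.inr ⟨findPairP_fst_mem st.2 c.1 b (by rw [h]), rfl⟩
    · exact Or.inl hp

lemma pstep_snd_mem (st : List (PLetter × PLetter) × List PLetter) (c : PLetter)
    (q : PLetter) (hq : q ∈ (pstep st c).2) : q ∈ st.2 := by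
  unfold pstep at hq
  rcases h : findPairP c.1 st.2 with ⟨o, r⟩
  rw [h] at hq
  have hr : q ∈ (findPairP c.1 st.2).2 → q ∈ st.2 := findPairP_snd_mem st.2 c.1 q
  cases o <;> simp at hq <;> exact hr (by rw [h]; exact hq)

lemma fold_mem (vr : List PLetter) :
    ∀ (st : List (PLetter × PLetter) × List PLetter),
    (∀ p ∈ (vr.foldl pstep st).1, p ∈ st.1 ∨ (p.1 ∈ st.2 ∧ p.2 ∈ vr)) ∧
    (∀ q ∈ (vr.foldl pstep st).2, q ∈ st.2) := by
  induction vr with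
  | nil => exact fun st => ⟨fun p hp => Or.inl hp, fun q hq => hq⟩
  | cons c vr ih =>
    intro st
    obtain ⟨ih1, ih2⟩ := ih (pstep st c)
    constructor
    · intro p hp
      rcases ih1 p (by simpa using hp) with h | ⟨h1, h2⟩
      · rcases pstep_fst_mem st c p h with h' | ⟨h1', h2'⟩
        · exact Or.inl h'
        · exact Or.inr ⟨h1', by rw [h2']; exact List.mem_cons_self⟩
      · exact Or.inr ⟨pstep_snd_mem st c p.1 h1, List.mem_cons_of_mem _ h2⟩
    · intro q hq
      exact pstep_snd_mem st c q (ih2 q (by simpa using hq))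

lemma pairsP_mem (u v : List PLetter) (p : PLetter × PLetter) (hp : p ∈ pairsP u v) :
    p.1 ∈ u ∧ p.2 ∈ v := by
  have hp' : p ∈ (v.reverse.foldl pstep ([], u)).1 := by
    rw [← pairFoldP_eq]; exact hp
  rcases (fold_mem v.reverse ([], u)).1 p hp' with h | ⟨h1, h2⟩
  · simp at h
  · exact ⟨h1, List.mem_reverse.mp h2⟩

/-! #### Unpaired-letter simulation -/

lemma mem_snd_iff (u v : List PLetter) (hv : (unprimeW v).Nodup) (c : PLetter) (hc : c ∈ v) :
    c.1 ∈ (pairsZ (unprimeW u) (unprimeW v)).map Prod.snd ↔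
      c ∈ (pairsP u v).map Prod.snd := by
  rw [pairsZ_sim]
  constructor
  · intro h
    rw [List.mem_map] at h
    obtain ⟨d, hd, he⟩ := h
    rw [List.mem_map] at hd
    obtain ⟨e, he2, rfl⟩ := hd
    have hev : e.2 ∈ v := (pairsP_mem u v e he2).2
    have he1 : e.2.1 = c.1 := he
    have : e.2 = c := List.inj_on_of_nodup_map hv hev hc he1
    rw [List.mem_map]
    exact ⟨e, he2, this⟩
  · intro h
    rw [List.mem_map] at h
    obtain ⟨e, he2, rfl⟩ := h
    rw [List.mem_map]
    exact ⟨ppr e, List.mem_map_of_mem he2, rfl⟩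

lemma mem_fst_iff (u v : List PLetter) (hu : (unprimeW u).Nodup) (b : PLetter) (hb : b ∈ u) :
    b.1 ∈ (pairsZ (unprimeW u) (unprimeW v)).map Prod.fst ↔
      b ∈ (pairsP u v).map Prod.fst := by
  rw [pairsZ_sim]
  constructor
  · intro h
    rw [List.mem_map] at h
    obtain ⟨d, hd, he⟩ := h
    rw [List.mem_map] at hd
    obtain ⟨e, he2, rfl⟩ := hd
    have hev : e.1 ∈ u := (pairsP_mem u v e he2).1
    have he1 : e.1.1 = b.1 := he
    have : e.1 = b := List.inj_on_of_nodup_map hu hev hb he1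
    rw [List.mem_map]
    exact ⟨e, he2, this⟩
  · intro h
    rw [List.mem_map] at h
    obtain ⟨e, he2, rfl⟩ := h
    rw [List.mem_map]
    exact ⟨ppr e, List.mem_map_of_mem he2, rfl⟩

lemma unpairedSnd_sim (u v : List PLetter) (hv : (unprimeW v).Nodup) :
    (unprimeW v).filter
        (fun c => decide (c ∉ (pairsZ (unprimeW u) (unprimeW v)).map Prod.snd)) =
      unprimeW (unpairedSnd u v) := by
  unfold unpairedSnd
  rw [show unprimeW (List.filter (fun c => decide (c ∉ (pairsP u v).map Prod.snd)) v) =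
    (List.filter (fun c => decide (c ∉ (pairsP u v).map Prod.snd)) v).map Prod.fst from rfl]
  rw [show unprimeW v = v.map Prod.fst from rfl, List.filter_map]
  congr 1
  apply List.filter_congr
  intro c hc
  simp only [Function.comp_apply, decide_eq_decide]
  exact not_congr (mem_snd_iff u v hv c hc)

lemma unpairedFst_sim (u v : List PLetter) (hu : (unprimeW u).Nodup) :
    (unprimeW u).filter
        (fun b => decide (b ∉ (pairsZ (unprimeW u) (unprimeW v)).map Prod.fst)) =
      unprimeW (unpairedFst u v) := by
  unfold unpairedFst
  rw [show unprimeW (List.filter (fun b => decide (b ∉ (pairsP u v).map Prod.fst)) u) =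
    (List.filter (fun b => decide (b ∉ (pairsP u v).map Prod.fst)) u).map Prod.fst from rfl]
  rw [show unprimeW u = u.map Prod.fst from rfl, List.filter_map]
  congr 1
  apply List.filter_congr
  intro b hb
  simp only [Function.comp_apply, decide_eq_decide]
  exact not_congr (mem_fst_iff u v hu b hb)

/-! #### Insert, erase, toggle simulation -/

lemma insertDec_sim (m : ℤ) (s : Bool) (u : List PLetter) (hm : m ∉ unprimeW u) :
    unprimeW (insertDecP (m, s) u) = insertDecZ m (unprimeW u) := by
  induction u with
  | nil => rfl
  | cons q t ih =>
    have hq : q.1 ≠ m := by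
      intro e; exact hm (by rw [unprimeW_cons, ← e]; exact List.mem_cons_self)
    have hm' : m ∉ unprimeW t := fun h => hm (by rw [unprimeW_cons]; exact List.mem_cons_of_mem _ h)
    have hcond : (pval q < pval (m, s)) ↔ (q.1 < m) := by
      rcases q with ⟨q1, qb⟩
      simp only [ne_eq] at hq
      cases qb <;> cases s <;> simp [pval] at hq ⊢ <;> omega
    rw [unprimeW_cons]
    simp only [insertDecP, insertDecZ]
    by_cases h : q.1 < m
    · rw [if_pos (hcond.mpr h), if_pos h]; rfl
    · rw [if_neg (fun hh => h (hcond.mp hh)), if_neg h, unprimeW_cons, ih hm']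

lemma erase_sim (v : List PLetter) (x : PLetter) (hx : x ∈ v) (hv : (unprimeW v).Nodup) :
    unprimeW (v.erase x) = (unprimeW v).erase x.1 := by
  induction v with
  | nil => simp at hx
  | cons b t ih =>
    by_cases h : b = x
    · subst h
      rw [List.erase_cons_head, unprimeW_cons, List.erase_cons_head]
    · have hxt : x ∈ t := by
        rcases List.mem_cons.mp hx with h' | h'
        · exact absurd h'.symm h
        · exact h'
      have hbx : b.1 ≠ x.1 := by
        intro e
        have h1 : x.1 ∈ unprimeW t := mem_unprimeW.mpr ⟨x, hxt, rfl⟩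
        have h2 : b.1 ∉ unprimeW t := (List.nodup_cons.mp hv).1
        exact h2 (e ▸ h1)
      rw [List.erase_cons_tail (by simp [h]), unprimeW_cons, unprimeW_cons,
        List.erase_cons_tail (by simp [hbx]), ih hxt (List.nodup_cons.mp hv).2]

lemma unprimeW_toggleIn (l : List PLetter) (p : PLetter) :
    unprimeW (toggleIn l p) = unprimeW l := by
  induction l with
  | nil => rfl
  | cons q t ih =>
    unfold toggleIn at ih ⊢
    rw [List.map_cons, unprimeW_cons, unprimeW_cons, ih]
    congr 1
    split <;> rfl

lemma swap_fold_sim (ps : List (PLetter × PLetter)) :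
    ∀ uv : List PLetter × List PLetter,
    unprimeW (ps.foldl swapPairIn uv).1 = unprimeW uv.1 ∧
    unprimeW (ps.foldl swapPairIn uv).2 = unprimeW uv.2 := by
  induction ps with
  | nil => exact fun uv => ⟨rfl, rfl⟩
  | cons bc ps ih =>
    intro uv
    rw [List.foldl_cons]
    obtain ⟨ih1, ih2⟩ := ih (swapPairIn uv bc)
    rw [ih1, ih2]
    unfold swapPairIn
    split
    · exact ⟨rfl, rfl⟩
    · exact ⟨unprimeW_toggleIn _ _, unprimeW_toggleIn _ _⟩

/-! #### Crystal step simulation -/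

lemma qUp_spec (L : List ℤ) (x : ℤ) : x + (qUp L x : ℤ) ∉ L := Nat.find_spec (exists_add_not_mem L x)
lemma qDown_spec (L : List ℤ) (x : ℤ) : x - (qDown L x : ℤ) ∉ L := Nat.find_spec (exists_sub_not_mem L x)

lemma eStepZ_eq_none (u v : List ℤ)
    (h : v.filter (fun c => decide (c ∉ (pairsZ u v).map Prod.snd)) = []) :
    eStepZ u v = none := by
  unfold eStepZ; rw [h]

lemma eStepZ_eq_some (u v : List ℤ) (x : ℤ) (r : List ℤ)
    (h : v.filter (fun c => decide (c ∉ (pairsZ u v).map Prod.snd)) = x :: r) :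
    eStepZ u v = some (insertDecZ (x + (qUp u x : ℤ)) u, v.erase x) := by
  unfold eStepZ; rw [h]

lemma eStepP_eq_none (u v : List PLetter) (h : unpairedSnd u v = []) :
    eStepP u v = none := by
  unfold eStepP; rw [h]

lemma eStepP_eq_some (u v : List PLetter) (x : PLetter) (r : List PLetter)
    (h : unpairedSnd u v = x :: r) :
    eStepP u v = some (((pairsP u v).filter fun bc =>
        decide (x.1 < bc.2.1 ∧ bc.2.1 ≤ x.1 + (qUp (unprimeW u) x.1 : ℤ))).foldl swapPairIn
      (insertDecP (x.1 + (qUp (unprimeW u) x.1 : ℤ), x.2) u, v.erase x)) := by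
  unfold eStepP; rw [h]

lemma eStep_sim (u v : List PLetter) (hv : (unprimeW v).Nodup) :
    eStepZ (unprimeW u) (unprimeW v) =
      (eStepP u v).map (fun uv => (unprimeW uv.1, unprimeW uv.2)) := by
  rcases h : unpairedSnd u v with _ | ⟨x, r⟩
  · rw [eStepZ_eq_none _ _ (by rw [unpairedSnd_sim u v hv, h]; rfl), eStepP_eq_none u v h]
    rfl
  · rw [eStepZ_eq_some (unprimeW u) (unprimeW v) x.1 (unprimeW r)
      (by rw [unpairedSnd_sim u v hv, h]; rfl), eStepP_eq_some u v x r h]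
    have hxv : x ∈ v := by
      have hx : x ∈ unpairedSnd u v := by rw [h]; exact List.mem_cons_self
      exact List.mem_of_mem_filter hx
    have hfold := swap_fold_sim ((pairsP u v).filter fun bc =>
        decide (x.1 < bc.2.1 ∧ bc.2.1 ≤ x.1 + (qUp (unprimeW u) x.1 : ℤ)))
      (insertDecP (x.1 + (qUp (unprimeW u) x.1 : ℤ), x.2) u, v.erase x)
    simp only [Option.map_some]
    congr 1
    refine Prod.ext ?_ ?_
    · rw [hfold.1]
      exact (insertDec_sim _ x.2 u (qUp_spec (unprimeW u) x.1)).symm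
    · rw [hfold.2]
      exact (erase_sim v x hxv hv).symm

lemma fStepZ_eq_none (u v : List ℤ)
    (h : (u.filter (fun b => decide (b ∉ (pairsZ u v).map Prod.fst))).getLast? = none) :
    fStepZ u v = none := by
  unfold fStepZ; rw [h]

lemma fStepZ_eq_some (u v : List ℤ) (y : ℤ)
    (h : (u.filter (fun b => decide (b ∉ (pairsZ u v).map Prod.fst))).getLast? = some y) :
    fStepZ u v = some (u.erase y, insertDecZ (y - (qDown v y : ℤ)) v) := by
  unfold fStepZ; rw [h]

lemma fStepP_eq_none (u v : List PLetter) (h : (unpairedFst u v).getLast? = none) :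
    fStepP u v = none := by
  unfold fStepP; rw [h]

lemma fStepP_eq_some (u v : List PLetter) (y : PLetter)
    (h : (unpairedFst u v).getLast? = some y) :
    fStepP u v = some (((pairsP u v).filter fun bc =>
        decide (y.1 - (qDown (unprimeW v) y.1 : ℤ) ≤ bc.1.1 ∧ bc.1.1 < y.1)).foldl swapPairIn
      (u.erase y, insertDecP (y.1 - (qDown (unprimeW v) y.1 : ℤ), y.2) v)) := by
  unfold fStepP; rw [h]

lemma fStep_sim (u v : List PLetter) (hu : (unprimeW u).Nodup) :
    fStepZ (unprimeW u) (unprimeW v) =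
      (fStepP u v).map (fun uv => (unprimeW uv.1, unprimeW uv.2)) := by
  have hlast : ((unprimeW u).filter
      (fun b => decide (b ∉ (pairsZ (unprimeW u) (unprimeW v)).map Prod.fst))).getLast? =
      ((unpairedFst u v).getLast?).map Prod.fst := by
    rw [unpairedFst_sim u v hu,
      show unprimeW (unpairedFst u v) = (unpairedFst u v).map Prod.fst from rfl,
      List.getLast?_map]
  rcases h : (unpairedFst u v).getLast? with _ | y
  · rw [fStepZ_eq_none _ _ (by rw [hlast, h]; rfl), fStepP_eq_none u v h]
    rfl
  · rw [fStepZ_eq_some (unprimeW u) (unprimeW v) y.1 (by rw [hlast, h]; rfl),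
      fStepP_eq_some u v y h]
    have hyu : y ∈ u := by
      have hy : y ∈ unpairedFst u v := List.mem_of_getLast? h
      exact List.mem_of_mem_filter hy
    have hfold := swap_fold_sim ((pairsP u v).filter fun bc =>
        decide (y.1 - (qDown (unprimeW v) y.1 : ℤ) ≤ bc.1.1 ∧ bc.1.1 < y.1))
      (u.erase y, insertDecP (y.1 - (qDown (unprimeW v) y.1 : ℤ), y.2) v)
    simp only [Option.map_some]
    congr 1
    refine Prod.ext ?_ ?_
    · rw [hfold.1]
      exact (erase_sim u y hyu hu).symm
    · rw [hfold.2]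
      exact (insertDec_sim _ y.2 v (qDown_spec (unprimeW v) y.1)).symm

/-! #### Operator-level simulation -/

lemma unprimeF_update (a : ℕ → List PLetter) (k : ℕ) (l : List PLetter) :
    unprimeF (Function.update a k l) = Function.update (unprimeF a) k (unprimeW l) := by
  funext m
  by_cases h : m = k
  · subst h; simp [unprimeF]
  · simp [unprimeF, Function.update_of_ne h]

lemma eZ_sim (i : ℕ) (a : ℕ → List PLetter) (hv : (unprimeW (a (i+1))).Nodup) :
    eZ i (unprimeF a) = Option.map unprimeF (eP i a) := by
  unfold eZ eP applyAtZ applyAtP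
  rw [show unprimeF a i = unprimeW (a i) from rfl,
    show unprimeF a (i+1) = unprimeW (a (i+1)) from rfl, eStep_sim _ _ hv]
  rcases h : eStepP (a i) (a (i+1)) with _ | uv
  · rfl
  · simp only [Option.map_some]
    rw [unprimeF_update, unprimeF_update]

lemma fZ_sim (i : ℕ) (a : ℕ → List PLetter) (hu : (unprimeW (a i)).Nodup) :
    fZ i (unprimeF a) = Option.map unprimeF (fP i a) := by
  unfold fZ fP applyAtZ applyAtP
  rw [show unprimeF a i = unprimeW (a i) from rfl,
    show unprimeF a (i+1) = unprimeW (a (i+1)) from rfl, fStep_sim _ _ hu]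
  rcases h : fStepP (a i) (a (i+1)) with _ | uv
  · rfl
  · simp only [Option.map_some]
    rw [unprimeF_update, unprimeF_update]

/-! #### Nodup of factors -/

lemma reduced_no_xx {w : Equiv.Perm ℤ} {L : List ℤ} (h : IsReducedWord w L) :
    ∀ (u v : List ℤ) (x : ℤ), L ≠ u ++ x :: x :: v := by
  rintro u v x rfl
  have he : wordProd (u ++ x :: x :: v) = wordProd (u ++ v) := by
    rw [wordProd_append, wordProd_append, wordProd_cons, wordProd_cons]
    rw [show wordProd u * (sT x * (sT x * wordProd v)) = wordProd u * ((sT x * sT x) * wordProd v) from by group]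
    rw [sT_sq, one_mul]
  have hle := h.2 (u ++ v) (by rw [← he]; exact h.1)
  simp at hle

lemma no_xx_of_infix {L M : List ℤ} (h : M <:+: L)
    (hL : ∀ (u v : List ℤ) (x : ℤ), L ≠ u ++ x :: x :: v) :
    ∀ (u v : List ℤ) (x : ℤ), M ≠ u ++ x :: x :: v := by
  rintro u v x rfl
  obtain ⟨s, t, rfl⟩ := h
  exact hL (s ++ u) (v ++ t) x (by simp)

lemma nodup_of_pdec (l : List PLetter) (hl : PDec l)
    (h : ∀ (u v : List ℤ) (x : ℤ), unprimeW l ≠ u ++ x :: x :: v) : (unprimeW l).Nodup := by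
  induction l with
  | nil => simp
  | cons p t ih =>
    rw [unprimeW_cons, List.nodup_cons]
    have hpd := List.pairwise_cons.mp hl
    constructor
    · intro hmem
      rw [mem_unprimeW] at hmem
      obtain ⟨q, hq, hq1⟩ := hmem
      cases t with
      | nil => simp at hq
      | cons r t' =>
        have hr : r.1 = p.1 := by
          have h1 : pval q < pval p := hpd.1 q hq
          rcases List.mem_cons.mp hq with rfl | hq'
          · exact hq1
          · have h2 : pval q < pval r := (List.pairwise_cons.mp hpd.2).1 q hq'
            have h3 : pval r < pval p := hpd.1 r (List.mem_cons_self)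
            exfalso
            rcases q with ⟨q1, qb⟩
            rcases p with ⟨p1, pb⟩
            rcases r with ⟨r1, rb⟩
            simp only at hq1
            subst hq1
            cases qb <;> cases pb <;> cases rb <;> simp [pval] at h1 h2 h3 <;> omega
        exact h [] (unprimeW t') p.1 (by simp [hr])
    · refine ih hpd.2 ?_
      intro u v x he
      exact h (p.1 :: u) v x (by simp [he])

lemma zdec_of_pdec (l : List PLetter) (h : PDec l) (hn : (unprimeW l).Nodup) :
    ZDec (unprimeW l) := by
  unfold ZDec unprimeW
  rw [List.pairwise_map]
  have h2 : l.Pairwise (fun a b => a.1 ≠ b.1) := List.pairwise_map.mp hn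
  exact (h.and h2).imp (fun {a b} hab => by
    obtain ⟨h1, h2'⟩ := hab
    rcases a with ⟨a1, ab⟩
    rcases b with ⟨b1, bb⟩
    simp only [ne_eq] at h2' ⊢
    cases ab <;> cases bb <;> simp [pval] at h1 <;> omega)

lemma pdec_of_zdec_prime (l : List PLetter) (h : ZDec (unprimeW l)) : PDec l := by
  unfold PDec
  unfold ZDec unprimeW at h
  rw [List.pairwise_map] at h
  exact h.imp (fun {a b} hab => by
    rcases a with ⟨a1, ab⟩
    rcases b with ⟨b1, bb⟩
    simp only at hab
    cases ab <;> cases bb <;> simp [pval] <;> omega)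

/-! #### markedSet via pairAt -/

lemma unprimeW_drop (M : List PLetter) (k : ℕ) :
    (M.drop k).reverse.map Prod.fst = ((unprimeW M).drop k).reverse := by
  unfold unprimeW
  rw [List.map_reverse, List.map_drop]

lemma getD_unprimeW (M : List PLetter) (j : ℕ) (h : j < M.length) :
    (unprimeW M).getD j 0 = (M.get ⟨j, h⟩).1 := by
  rw [List.getD_eq_getElem _ _ (by simpa using h)]
  simp [unprimeW]

lemma markedSet_eq (M : List PLetter) :
    markedSet M = {p | ∃ j : Fin M.length, (M.get j).2 = true ∧
      p = pairAt (unprimeW M) (j : ℕ)} := by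
  unfold markedSet pairAt
  ext p
  simp only [Set.mem_setOf_eq]
  constructor
  · rintro ⟨j, hj, h1, h2⟩
    refine ⟨j, hj, ?_⟩
    have e := unprimeW_drop M ((j : ℕ) + 1)
    have e2 := getD_unprimeW M (j : ℕ) j.2
    apply Prod.ext
    · rw [h1, e, e2]
    · rw [h2, e, e2]
  · rintro ⟨j, hj, rfl⟩
    refine ⟨j, hj, ?_, ?_⟩
    · rw [unprimeW_drop M ((j : ℕ) + 1), getD_unprimeW M (j : ℕ) j.2]
    · rw [unprimeW_drop M ((j : ℕ) + 1), getD_unprimeW M (j : ℕ) j.2]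

/-! #### Concatenation lemmas -/

lemma concatZ_unprimeF (a : ℕ → List PLetter) (n : ℕ) :
    concatZ (unprimeF a) n = unprimeW (concatP a n) := by
  unfold concatZ concatP unprimeW unprimeF
  rw [List.map_flatten, List.map_map]
  rfl

lemma infix_factor (a : ℕ → List PLetter) (n m : ℕ) (hm : m < n) :
    a m <:+: concatP a n := by
  unfold concatP
  exact List.infix_of_mem_flatten (List.mem_map_of_mem (f := a) (List.mem_range.mpr hm))

lemma concatZ_succ (g : ℕ → List ℤ) (n : ℕ) :
    concatZ g (n + 1) = g 0 ++ concatZ (fun k => g (k + 1)) n := by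
  unfold concatZ
  rw [List.range_succ_eq_map, List.map_cons, List.map_map, List.flatten_cons]
  rfl

lemma flatten_eq_of_lengths (F F' : List (List PLetter))
    (hlen : F.map List.length = F'.map List.length) (h : F.flatten = F'.flatten) : F = F' := by
  induction F generalizing F' with
  | nil =>
    cases F' with
    | nil => rfl
    | cons a t => simp at hlen
  | cons a t ih =>
    cases F' with
    | nil => simp at hlen
    | cons a' t' =>
      simp only [List.map_cons, List.cons.injEq] at hlen
      simp only [List.flatten_cons] at h
      obtain ⟨he, ht⟩ := List.append_inj h hlen.1
      rw [he, ih t' hlen.2 ht]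

/-! #### The priming construction -/

open Classical in
noncomputable def primeFac (A : Set (ℤ × ℤ)) : List ℤ → List ℤ → List PLetter
  | [], _ => []
  | x :: t, s =>
    (x, if (wordProd (t ++ s).reverse x, wordProd (t ++ s).reverse (x + 1)) ∈ A then true
        else false) :: primeFac A t s

lemma primeFac_unprime (A : Set (ℤ × ℤ)) : ∀ (l s : List ℤ), unprimeW (primeFac A l s) = l := by
  intro l
  induction l with
  | nil => intro s; rfl
  | cons x t ih => intro s; rw [primeFac, unprimeW_cons, ih]

lemma primeFac_append (A : Set (ℤ × ℤ)) :
    ∀ (l₁ l₂ s : List ℤ), primeFac A (l₁ ++ l₂) s = primeFac A l₁ (l₂ ++ s) ++ primeFac A l₂ s := by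
  intro l₁
  induction l₁ with
  | nil => intro l₂ s; rfl
  | cons x t ih =>
    intro l₂ s
    rw [List.cons_append, primeFac, primeFac, ih, List.cons_append, List.append_assoc]

lemma primeFac_marked (A : Set (ℤ × ℤ)) :
    ∀ (l : List ℤ) (s : List ℤ) (j : ℕ), j < l.length →
      (((primeFac A l s).getD j ((0 : ℤ), false)).2 = true ↔ pairAt (l ++ s) j ∈ A) := by
  intro l
  induction l with
  | nil => intro s j hj; simp at hj
  | cons x t ih =>
    intro s j hj
    cases j with
    | zero =>
      rw [primeFac, List.getD_cons_zero]
      have hp : pairAt ((x :: t) ++ s) 0 =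
          (wordProd (t ++ s).reverse x, wordProd (t ++ s).reverse (x + 1)) := by
        rw [List.cons_append, pairAt_zero, wordProd_reverse]
      rw [hp]
      split_ifs with h
      · exact iff_of_true rfl h
      · exact iff_of_false (by simp) h
    | succ j =>
      rw [primeFac, List.getD_cons_succ, List.cons_append, pairAt_succ]
      exact ih s j (by simpa using hj)

lemma primeFac_concat (A : Set (ℤ × ℤ)) :
    ∀ (d : ℕ) (g : ℕ → List ℤ),
      ((List.range d).map (fun k =>
          primeFac A (g k) (concatZ (fun k' => g (k + 1 + k')) (d - (k + 1))))).flatten =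
        primeFac A (concatZ g d) [] := by
  intro d
  induction d with
  | zero => intro g; rfl
  | succ d ih =>
    intro g
    rw [List.range_succ_eq_map, List.map_cons, List.map_map, List.flatten_cons]
    have e0 : (fun k' => g (0 + 1 + k')) = (fun k' => g (k' + 1)) := by
      funext k'; congr 1; omega
    have e1 : ((fun k =>
        primeFac A (g k) (concatZ (fun k' => g (k + 1 + k')) (d + 1 - (k + 1)))) ∘ Nat.succ) =
        (fun k => primeFac A ((fun m => g (m + 1)) k)
          (concatZ (fun k' => (fun m => g (m + 1)) (k + 1 + k')) (d - (k + 1)))) := by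
      funext k
      have h2 : d + 1 - (Nat.succ k + 1) = d - (k + 1) := by omega
      have h3 : (fun k' => g (Nat.succ k + 1 + k')) = (fun k' => g (k + 1 + k' + 1)) := by
        funext k'; congr 1; omega
      simp only [Function.comp_apply, h2, h3]
    rw [e1, ih (fun m => g (m + 1))]
    have hsub : d + 1 - (0 + 1) = d := by omega
    rw [hsub, e0]
    rw [show primeFac A (g 0) (concatZ (fun k' => g (k' + 1)) d) =
      primeFac A (g 0) (concatZ (fun k' => g (k' + 1)) d ++ []) from by rw [List.append_nil]]
    rw [← primeFac_append A (g 0) (concatZ (fun k' => g (k' + 1)) d) [], ← concatZ_succ g d]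

/-! #### Primes are determined by the marked set -/

lemma primes_determined (M M' : List PLetter) (hM : unprimeW M = unprimeW M')
    (hmark : markedSet M = markedSet M')
    (hinj : ∀ j < (unprimeW M).length, ∀ k < (unprimeW M).length,
      pairAt (unprimeW M) j = pairAt (unprimeW M) k → j = k) : M = M' := by
  have hlen : M.length = M'.length := by
    rw [← unprimeW_length, ← unprimeW_length, hM]
  apply List.ext_get hlen
  intro j h1 h2
  have hfst : (M.get ⟨j, h1⟩).1 = (M'.get ⟨j, h2⟩).1 := by
    rw [← getD_unprimeW M j h1, ← getD_unprimeW M' j h2, hM]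
  have hsnd : (M.get ⟨j, h1⟩).2 = (M'.get ⟨j, h2⟩).2 := by
    rw [Bool.eq_iff_iff]
    have hlenu : j < (unprimeW M).length := by rwa [unprimeW_length]
    constructor
    · intro hb
      have hm : pairAt (unprimeW M) j ∈ markedSet M := by
        rw [markedSet_eq]
        exact ⟨⟨j, h1⟩, hb, rfl⟩
      rw [hmark, markedSet_eq] at hm
      obtain ⟨k, hk, he⟩ := hm
      have hkj : (k : ℕ) = j := by
        refine hinj k ?_ j hlenu (by rw [hM, ← he, hM])
        rw [hM, unprimeW_length]; exact k.2
      have : k = ⟨j, h2⟩ := Fin.ext hkj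
      rwa [← this]
    · intro hb
      have hm : pairAt (unprimeW M') j ∈ markedSet M' := by
        rw [markedSet_eq]
        exact ⟨⟨j, h2⟩, hb, rfl⟩
      rw [← hmark, markedSet_eq] at hm
      obtain ⟨k, hk, he⟩ := hm
      have hkj : (k : ℕ) = j := by
        refine hinj k ?_ j hlenu (by rw [← hM] at he; rw [← he])
        exact lt_of_lt_of_eq k.2 (by rw [unprimeW_length])
      have : k = ⟨j, h1⟩ := Fin.ext hkj
      rwa [← this]
  exact Prod.ext hfst hsnd

lemma reduced_pairs {w : Equiv.Perm ℤ} {L : List ℤ} (h : IsReducedWord w L) :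
    (∀ j < L.length, ∀ k < L.length, pairAt L j = pairAt L k → j = k) ∧
    {p | ∃ j < L.length, pairAt L j = p} = InvSet w := by
  have hmin : ∀ m : List ℤ, wordProd m = wordProd L → L.length ≤ m.length := by
    intro m hm
    exact h.2 m (by rw [hm, h.1])
  obtain ⟨_, h2, h3⟩ := main_pairs L hmin
  refine ⟨h2, ?_⟩
  rw [h3, h.1]

/-- `unprime` is a weight-preserving bijection `RF⁺_n(w, A) → RF_n(w)` that
commutes with the crystal operators `e_i`, `f_i` for all `i ∈ {1, …, n-1}` (0-indexed here:
operator `i` acts on factors `i, i+1`, for `i + 1 < n`), with the convention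
`unprime 0 = 0`. -/
theorem unprime_crystal_isomorphism (n : ℕ) (hn : 0 < n) (w : Equiv.Perm ℤ) (hw : w ∈ SZSet)
    (A : Set (ℤ × ℤ)) (hA : A ⊆ InvSet w) :
    Set.BijOn unprimeF (RFplusN n w A) (RFZn n w) ∧
    (∀ a ∈ RFplusN n w A, ∀ m : ℕ, (unprimeF a m).length = (a m).length) ∧
    (∀ a ∈ RFplusN n w A, ∀ i : ℕ, i + 1 < n →
      eZ i (unprimeF a) = Option.map unprimeF (eP i a) ∧
      fZ i (unprimeF a) = Option.map unprimeF (fP i a)) := by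
  have hfacts : ∀ a ∈ RFplusN n w A, ∀ m, m < n → (unprimeW (a m)).Nodup := by
    intro a ha m hm
    obtain ⟨hdec, hz, hred, hmark⟩ := ha
    refine nodup_of_pdec _ (hdec m) ?_
    exact no_xx_of_infix (List.IsInfix.map Prod.fst (infix_factor a n m hm))
      (reduced_no_xx hred)
  refine ⟨⟨?_, ?_, ?_⟩, ?_, ?_⟩
  · -- MapsTo
    intro a ha
    obtain ⟨hdec, hz, hred, hmark⟩ := ha
    refine ⟨?_, ?_, ?_⟩
    · intro m
      by_cases hm : m < n
      · exact zdec_of_pdec _ (hdec m) (hfacts a ⟨hdec, hz, hred, hmark⟩ m hm)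
      · rw [show unprimeF a m = unprimeW (a m) from rfl, hz m (by omega)]
        exact List.Pairwise.nil
    · intro m hm
      rw [show unprimeF a m = unprimeW (a m) from rfl, hz m hm]
      rfl
    · rw [concatZ_unprimeF]
      exact hred
  · -- InjOn
    intro a ha a' ha' he
    obtain ⟨hdec, hz, hred, hmark⟩ := ha
    obtain ⟨hdec', hz', hred', hmark'⟩ := ha'
    have hL : unprimeW (concatP a n) = unprimeW (concatP a' n) := by
      rw [← concatZ_unprimeF, ← concatZ_unprimeF, he]
    have hMM : concatP a n = concatP a' n := by
      apply primes_determined _ _ hL (by rw [hmark, hmark'])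
      exact (reduced_pairs hred).1
    funext m
    by_cases hm : m < n
    · have hFlen : ((List.range n).map a).map List.length =
          ((List.range n).map a').map List.length := by
        rw [List.map_map, List.map_map]
        apply List.map_congr_left
        intro k _
        have h1 : (unprimeF a k).length = (unprimeF a' k).length := by rw [he]
        simpa [unprimeF, unprimeW] using h1
      have hF := flatten_eq_of_lengths _ _ hFlen hMM
      exact List.map_inj_left.mp hF m (List.mem_range.mpr hm)
    · rw [hz m (by omega), hz' m (by omega)]
  · -- SurjOn
    intro b hb
    obtain ⟨hbdec, hbz, hbred⟩ := hb
    refine ⟨fun m => primeFac A (b m) (concatZ (fun k' => b (m + 1 + k')) (n - (m + 1))),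
      ⟨?_, ?_, ?_, ?_⟩, ?_⟩
    · intro i
      apply pdec_of_zdec_prime
      rw [primeFac_unprime]
      exact hbdec i
    · intro m hm
      show primeFac A (b m) (concatZ (fun k' => b (m + 1 + k')) (n - (m + 1))) = []
      rw [hbz m hm]
      rfl
    · show IsReducedWord w (unprimeW (concatP _ n))
      rw [show concatP (fun m => primeFac A (b m)
          (concatZ (fun k' => b (m + 1 + k')) (n - (m + 1)))) n =
        primeFac A (concatZ b n) [] from primeFac_concat A n b, primeFac_unprime]
      exact hbred
    · rw [show concatP (fun m => primeFac A (b m)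
          (concatZ (fun k' => b (m + 1 + k')) (n - (m + 1)))) n =
        primeFac A (concatZ b n) [] from primeFac_concat A n b, markedSet_eq]
      have hrp := reduced_pairs hbred
      have hlenpf : (primeFac A (concatZ b n) []).length = (concatZ b n).length := by
        rw [← unprimeW_length, primeFac_unprime]
      ext p
      simp only [Set.mem_setOf_eq]
      constructor
      · rintro ⟨j, hj, rfl⟩
        have hjL : (j : ℕ) < (concatZ b n).length := by rw [← hlenpf]; exact j.2
        have hgetD : ((primeFac A (concatZ b n) []).getD (j : ℕ) ((0 : ℤ), false)).2 = true := by
          rw [List.getD_eq_getElem _ _ j.2, ← List.get_eq_getElem]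
          exact hj
        have hmem := (primeFac_marked A (concatZ b n) [] (j : ℕ) hjL).mp hgetD
        rw [List.append_nil] at hmem
        rw [primeFac_unprime]
        exact hmem
      · intro hp
        have hpInv : p ∈ InvSet w := hA hp
        rw [← hrp.2] at hpInv
        obtain ⟨j, hj, hpe⟩ := hpInv
        have hjpf : j < (primeFac A (concatZ b n) []).length := by rw [hlenpf]; exact hj
        refine ⟨⟨j, hjpf⟩, ?_, ?_⟩
        · have hgetD := (primeFac_marked A (concatZ b n) [] j hj).mpr
            (by rw [List.append_nil, hpe]; exact hp)
          rw [List.getD_eq_getElem _ _ hjpf] at hgetD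
          rw [List.get_eq_getElem]
          exact hgetD
        · rw [primeFac_unprime]
          exact hpe.symm
    · funext m
      exact primeFac_unprime A (b m) _
  · -- weights
    intro a _ m
    exact unprimeW_length (a m)
  · -- crystal operators
    intro a ha i hi
    constructor
    · exact eZ_sim i a (hfacts a ha (i + 1) hi)
    · exact fZ_sim i a (hfacts a ha i (by omega))
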